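/- Fix m ∈ ℕ and for each j = 1,…,m let ψ_j : ℝ^{n_j} → ℝ be a strictly convex differentiable function. Set n = n₁ + ⋯ + n_m and ψ(x) = Σ_{j=1}^m ψ_j(x_j) for x = (x₁,…,x_m) ∈ ℝⁿ, x_j ∈ ℝ^{n_j}. Then for every x ∈ ℝⁿ and R > 0: S_ψ(x,R) ⊂ ∏_{j=1}^m S_{ψ_j}(x_j,R) ⊂ S_ψ(x,mR). Moreover, if each ψ_j satisfies the engulfing property with constant θ_j, then ψ satisfies the engulfing property with constant θ = m · max_j θ_j; conversely, if ψ satisfies the engulfing property with constant θ > 1, then each ψ_j satisfies the engulfing property with constant θ. -/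

import Mathlib

open Set

noncomputable section

/-- Monge–Ampère quasi-distance of a differentiable function `ψ`. -/
def gDelta {E : Type*} [NormedAddCommGroup E] [NormedSpace ℝ E]
    (ψ : E → ℝ) (p q : E) : ℝ :=
  ψ q - ψ p - fderiv ℝ ψ p (q - p)

/-- Monge–Ampère section of `ψ` of radius `R` centered at `p`. -/
def gSect {E : Type*} [NormedAddCommGroup E] [NormedSpace ℝ E]
    (ψ : E → ℝ) (p : E) (R : ℝ) : Set E :=
  {q | gDelta ψ p q < R}

/-- `ψ` satisfies the engulfing property with constant `θ`. -/
def Engulfs {E : Type*} [NormedAddCommGroup E] [NormedSpace ℝ E]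
    (ψ : E → ℝ) (θ : ℝ) : Prop :=
  ∀ (p : E) (R : ℝ), 0 < R → ∀ q ∈ gSect ψ p R, gSect ψ p R ⊆ gSect ψ q (θ * R)

lemma gDelta_self {E : Type*} [NormedAddCommGroup E] [NormedSpace ℝ E]
    (ψ : E → ℝ) (p : E) : gDelta ψ p p = 0 := by
  simp [gDelta]

lemma gDelta_nonneg {E : Type*} [NormedAddCommGroup E] [NormedSpace ℝ E]
    {f : E → ℝ} (hd : Differentiable ℝ f) (hc : ConvexOn ℝ univ f) (p q : E) :
    0 ≤ gDelta f p q := by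
  set g : ℝ → ℝ := fun t => f (p + t • (q - p)) with hg
  have hgc : ConvexOn ℝ univ g := by
    have := hc.comp_affineMap
      (AffineMap.const ℝ ℝ p + (LinearMap.toAffineMap (LinearMap.smulRight (LinearMap.id : ℝ →ₗ[ℝ] ℝ) (q - p))))
    exact this
  have hcurve : HasDerivAt (fun t : ℝ => p + t • (q - p)) (q - p) 0 := by
    simpa using ((hasDerivAt_id (0:ℝ)).smul_const (q - p)).const_add p
  have hfp : HasFDerivAt f (fderiv ℝ f p) (p + (0:ℝ) • (q - p)) := by
    simpa using (hd p).hasFDerivAt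
  have hgd : HasDerivAt g (fderiv ℝ f p (q - p)) 0 := hfp.comp_hasDerivAt 0 hcurve
  have := hgc.le_slope_of_hasDerivAt (mem_univ (0:ℝ)) (mem_univ (1:ℝ)) one_pos hgd
  have hslope : slope g 0 1 = f q - f p := by
    simp [slope, hg]
  rw [hslope] at this
  simp only [gDelta]
  linarith

lemma gDelta_sum {m : ℕ} {nd : Fin m → ℕ} (ψ : ∀ j, (Fin (nd j) → ℝ) → ℝ)
    (hdiff : ∀ j, Differentiable ℝ (ψ j)) (x q : ∀ j, Fin (nd j) → ℝ) :
    gDelta (fun y : ∀ j, Fin (nd j) → ℝ => ∑ j, ψ j (y j)) x q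
      = ∑ j, gDelta (ψ j) (x j) (q j) := by
  have hF : HasFDerivAt (fun y : ∀ j, Fin (nd j) → ℝ => ∑ j, ψ j (y j))
      (∑ j, (fderiv ℝ (ψ j) (x j)).comp
        (ContinuousLinearMap.proj (R := ℝ) (φ := fun j => Fin (nd j) → ℝ) j)) x := by
    apply HasFDerivAt.fun_sum
    intro j _
    exact ((hdiff j (x j)).hasFDerivAt).comp x
      ((ContinuousLinearMap.proj (R := ℝ) (φ := fun j => Fin (nd j) → ℝ) j).hasFDerivAt)
  simp only [gDelta, hF.fderiv, ContinuousLinearMap.sum_apply, ContinuousLinearMap.comp_apply,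
    ContinuousLinearMap.proj_apply, Pi.sub_apply]
  rw [← Finset.sum_sub_distrib, ← Finset.sum_sub_distrib]

/-- Lemma 4.6: sections of a sum of strictly convex functions in
separated variables are comparable to products of sections, and the engulfing property
tensorizes. -/
theorem tensor_sections_engulfing
    (m : ℕ) (hm : 1 ≤ m) (nd : Fin m → ℕ)
    (ψ : ∀ j, (Fin (nd j) → ℝ) → ℝ)
    (hdiff : ∀ j, Differentiable ℝ (ψ j))
    (hconv : ∀ j, StrictConvexOn ℝ (univ : Set (Fin (nd j) → ℝ)) (ψ j)) :
    (∀ (x : ∀ j, Fin (nd j) → ℝ) (R : ℝ), 0 < R →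
      gSect (fun y : ∀ j, Fin (nd j) → ℝ => ∑ j, ψ j (y j)) x R ⊆
          {q : ∀ j, Fin (nd j) → ℝ | ∀ j, q j ∈ gSect (ψ j) (x j) R} ∧
        {q : ∀ j, Fin (nd j) → ℝ | ∀ j, q j ∈ gSect (ψ j) (x j) R} ⊆
          gSect (fun y : ∀ j, Fin (nd j) → ℝ => ∑ j, ψ j (y j)) x ((m : ℝ) * R)) ∧
    (∀ (θ : Fin m → ℝ) (θ₀ : ℝ), (∀ j, 1 ≤ θ j) → (∀ j, θ j ≤ θ₀) →
      (∀ j, Engulfs (ψ j) (θ j)) →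
      Engulfs (fun y : ∀ j, Fin (nd j) → ℝ => ∑ j, ψ j (y j)) ((m : ℝ) * θ₀)) ∧
    (∀ θ : ℝ, 1 < θ →
      Engulfs (fun y : ∀ j, Fin (nd j) → ℝ => ∑ j, ψ j (y j)) θ →
      ∀ j, Engulfs (ψ j) θ) := by
  haveI : Nonempty (Fin m) := Fin.pos_iff_nonempty.mp hm
  have hnn : ∀ j (p q : Fin (nd j) → ℝ), 0 ≤ gDelta (ψ j) p q :=
    fun j p q => gDelta_nonneg (hdiff j) (hconv j).convexOn p q
  have hsum := gDelta_sum ψ hdiff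
  -- each coordinate delta is at most the total delta
  have hcoord : ∀ (x q : ∀ j, Fin (nd j) → ℝ) (j : Fin m),
      gDelta (ψ j) (x j) (q j) ≤ ∑ i, gDelta (ψ i) (x i) (q i) := by
    intro x q j
    exact Finset.single_le_sum (fun i _ => hnn i (x i) (q i)) (Finset.mem_univ j)
  refine ⟨?_, ?_, ?_⟩
  · intro x R hR
    constructor
    · intro q hq j
      have hq' : ∑ i, gDelta (ψ i) (x i) (q i) < R := by
        simpa [gSect, hsum x q] using hq
      exact lt_of_le_of_lt (hcoord x q j) hq'
    · intro q hq
      have : ∑ i, gDelta (ψ i) (x i) (q i) < ∑ _i : Fin m, R :=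
        Finset.sum_lt_sum_of_nonempty Finset.univ_nonempty (fun i _ => hq i)
      simpa [gSect, hsum x q, mul_comm] using this
  · intro θ θ₀ hθ1 hθ0 heng x R hR q hq z hz
    have hq' : ∑ i, gDelta (ψ i) (x i) (q i) < R := by
      simpa [gSect, hsum x q] using hq
    have hz' : ∑ i, gDelta (ψ i) (x i) (z i) < R := by
      simpa [gSect, hsum x z] using hz
    have key : ∀ j, gDelta (ψ j) (q j) (z j) < θ₀ * R := by
      intro j
      have hqj : q j ∈ gSect (ψ j) (x j) R :=
        lt_of_le_of_lt (hcoord x q j) hq'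
      have hzj : z j ∈ gSect (ψ j) (x j) R :=
        lt_of_le_of_lt (hcoord x z j) hz'
      have := heng j (x j) R hR (q j) hqj hzj
      have hθR : θ j * R ≤ θ₀ * R := mul_le_mul_of_nonneg_right (hθ0 j) hR.le
      exact lt_of_lt_of_le this hθR
    have : ∑ i, gDelta (ψ i) (q i) (z i) < ∑ _i : Fin m, θ₀ * R :=
      Finset.sum_lt_sum_of_nonempty Finset.univ_nonempty (fun i _ => key i)
    simp only [gSect, mem_setOf_eq, hsum q z]
    calc ∑ i, gDelta (ψ i) (q i) (z i) < ∑ _i : Fin m, θ₀ * R := this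
      _ = (m : ℝ) * θ₀ * R := by simp [Finset.sum_const, mul_assoc]
  · intro θ hθ heng j p R hR q hq z hz
    set b : ∀ i, Fin (nd i) → ℝ := fun _ => 0 with hb
    have hdel : ∀ (u v : Fin (nd j) → ℝ),
        gDelta (fun y : ∀ i, Fin (nd i) → ℝ => ∑ i, ψ i (y i))
          (Function.update b j u) (Function.update b j v) = gDelta (ψ j) u v := by
      intro u v
      rw [hsum]
      rw [Finset.sum_eq_single j]
      · simp
      · intro i _ hij
        rw [Function.update_of_ne hij, Function.update_of_ne hij, gDelta_self]
      · intro h; exact absurd (Finset.mem_univ j) h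
    have hQ : Function.update b j q ∈
        gSect (fun y : ∀ i, Fin (nd i) → ℝ => ∑ i, ψ i (y i)) (Function.update b j p) R := by
      simpa [gSect, hdel p q] using hq
    have hZ : Function.update b j z ∈
        gSect (fun y : ∀ i, Fin (nd i) → ℝ => ∑ i, ψ i (y i)) (Function.update b j p) R := by
      simpa [gSect, hdel p z] using hz
    have := heng (Function.update b j p) R hR (Function.update b j q) hQ hZ
    simpa [gSect, hdel q z] using this
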